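/- Every extreme point x of the subtour polytope S^n (the set of x in R^{E(K_n)} with 0 ≤ x_e ≤ 1 for all edges e, x(δ(v)) = 2 for every vertex v, and x(δ(S)) ≥ 2 for every proper nonempty subset S of vertices) has a support graph G_x = (V, {e : x_e > 0}) with at most 2n − 3 edges. -/

import Mathlib

set_option maxHeartbeats 1000000


open Finset
open scoped Classical

noncomputable section

/-- Edge set of the complete graph `K_n` as non-diagonal elements of `Sym2 (Fin n)`. -/
def edgeSet (n : ℕ) : Finset (Sym2 (Fin n)) :=
  Finset.univ.filter (fun e => ¬ e.IsDiag)

/-- The cut `δ(S)`: edges with exactly one endpoint in `S`. -/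
def cut {n : ℕ} (S : Finset (Fin n)) : Finset (Sym2 (Fin n)) :=
  Finset.univ.filter (fun e => ¬ e.IsDiag ∧ ∃ u v : Fin n, e = s(u, v) ∧ u ∈ S ∧ v ∉ S)

/-- Membership in the subtour polytope `S^n`. -/
def InSubtour (n : ℕ) (x : Sym2 (Fin n) → ℝ) : Prop :=
  (∀ e ∈ edgeSet n, 0 ≤ x e ∧ x e ≤ 1) ∧
  (∀ v : Fin n, ∑ e ∈ cut ({v} : Finset (Fin n)), x e = 2) ∧
  (∀ S : Finset (Fin n), 2 ≤ S.card → S.card ≤ n - 2 → 2 ≤ ∑ e ∈ cut S, x e)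

/-- Extreme point of the subtour polytope: not a proper convex combination
(equivalently, not the midpoint of two distinct points of `S^n`). -/
def IsExtremePt (n : ℕ) (x : Sym2 (Fin n) → ℝ) : Prop :=
  InSubtour n x ∧
  ∀ y z : Sym2 (Fin n) → ℝ, InSubtour n y → InSubtour n z →
    (∀ e ∈ edgeSet n, x e = (y e + z e) / 2) → ∀ e ∈ edgeSet n, y e = z e

/-- Support edges of `x`: edges with strictly positive value. -/
def supportEdges {n : ℕ} (x : Sym2 (Fin n) → ℝ) : Finset (Sym2 (Fin n)) :=
  (edgeSet n).filter (fun e => 0 < x e)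

/-- Degree of a vertex in the support graph of `x`. -/
def supDeg {n : ℕ} (x : Sym2 (Fin n) → ℝ) (v : Fin n) : ℕ :=
  (cut ({v} : Finset (Fin n)) ∩ supportEdges x).card

/-- `x` is the incidence vector of a Hamiltonian cycle of `K_n`. -/
def IsHamCycle (n : ℕ) (x : Sym2 (Fin n) → ℝ) : Prop :=
  ∃ σ : Equiv.Perm (Fin n), σ.IsCycle ∧ σ.support = Finset.univ ∧
    ∀ e ∈ edgeSet n, x e = if (∃ v : Fin n, e = s(v, σ v)) then 1 else 0

/-- Cost `c^T x` over the edges of `K_n`. -/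
def cost {n : ℕ} (c x : Sym2 (Fin n) → ℝ) : ℝ := ∑ e ∈ edgeSet n, c e * x e

/-- `c` is a metric cost function: nonnegative (symmetry is built into `Sym2`)
and satisfying the triangle inequality. -/
def IsMetricCost (n : ℕ) (c : Sym2 (Fin n) → ℝ) : Prop :=
  (∀ e, 0 ≤ c e) ∧ ∀ i j k : Fin n, c s(i, k) ≤ c s(i, j) + c s(j, k)


variable {n : ℕ}

lemma mem_cut {S : Finset (Fin n)} {u v : Fin n} :
    s(u, v) ∈ cut S ↔ u ≠ v ∧ ((u ∈ S ∧ v ∉ S) ∨ (v ∈ S ∧ u ∉ S)) := by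
  simp only [cut, Finset.mem_filter, Finset.mem_univ, true_and, Sym2.mk_isDiag_iff]
  constructor
  · rintro ⟨hne, a, b, hab, haS, hbS⟩
    rw [Sym2.eq_iff] at hab
    rcases hab with ⟨rfl, rfl⟩ | ⟨rfl, rfl⟩
    · exact ⟨hne, Or.inl ⟨haS, hbS⟩⟩
    · exact ⟨hne, Or.inr ⟨haS, hbS⟩⟩
  · rintro ⟨hne, ⟨hu, hv⟩ | ⟨hv, hu⟩⟩
    · exact ⟨hne, u, v, rfl, hu, hv⟩
    · exact ⟨hne, v, u, Sym2.eq_swap.symm, hv, hu⟩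

lemma cut_subset_edgeSet (S : Finset (Fin n)) : cut S ⊆ edgeSet n := by
  intro e he
  simp only [cut, Finset.mem_filter] at he
  simp only [edgeSet, Finset.mem_filter, Finset.mem_univ, true_and]
  exact he.2.1

lemma cut_compl (S : Finset (Fin n)) : cut Sᶜ = cut S := by
  ext e
  induction e using Sym2.inductionOn with
  | hf u v =>
    simp only [mem_cut, Finset.mem_compl]
    tauto

lemma cut_empty : cut (∅ : Finset (Fin n)) = ∅ := by
  ext e
  induction e using Sym2.inductionOn with
  | hf u v => simp [mem_cut]

lemma sum_cut_eq' {A : Finset (Sym2 (Fin n))} (hA : A ⊆ edgeSet n) (f : Sym2 (Fin n) → ℝ) :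
    ∑ e ∈ A, f e = ∑ e ∈ edgeSet n, (if e ∈ A then f e else 0) := by
  rw [Finset.sum_ite_mem, Finset.inter_eq_right.mpr hA]

lemma sum_cut_eq (S : Finset (Fin n)) (f : Sym2 (Fin n) → ℝ) :
    ∑ e ∈ cut S, f e = ∑ e ∈ edgeSet n, (if e ∈ cut S then f e else 0) :=
  sum_cut_eq' (cut_subset_edgeSet S) f

/-- Edges with one endpoint in `S \ T` and the other in `T \ S`. -/
def btwE (S T : Finset (Fin n)) : Finset (Sym2 (Fin n)) :=
  Finset.univ.filter (fun e => ¬ e.IsDiag ∧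
    ∃ u v : Fin n, e = s(u, v) ∧ u ∈ S ∧ u ∉ T ∧ v ∈ T ∧ v ∉ S)

lemma mem_btw {S T : Finset (Fin n)} {u v : Fin n} :
    s(u, v) ∈ btwE S T ↔ u ≠ v ∧ ((u ∈ S ∧ u ∉ T ∧ v ∈ T ∧ v ∉ S) ∨
      (v ∈ S ∧ v ∉ T ∧ u ∈ T ∧ u ∉ S)) := by
  simp only [btwE, Finset.mem_filter, Finset.mem_univ, true_and, Sym2.mk_isDiag_iff]
  constructor
  · rintro ⟨hne, a, b, hab, h1, h2, h3, h4⟩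
    rw [Sym2.eq_iff] at hab
    rcases hab with ⟨rfl, rfl⟩ | ⟨rfl, rfl⟩
    · exact ⟨hne, Or.inl ⟨h1, h2, h3, h4⟩⟩
    · exact ⟨hne, Or.inr ⟨h1, h2, h3, h4⟩⟩
  · rintro ⟨hne, ⟨h1, h2, h3, h4⟩ | ⟨h1, h2, h3, h4⟩⟩
    · exact ⟨hne, u, v, rfl, h1, h2, h3, h4⟩
    · exact ⟨hne, v, u, Sym2.eq_swap.symm, h1, h2, h3, h4⟩

lemma btw_subset_edgeSet (S T : Finset (Fin n)) : btwE S T ⊆ edgeSet n := by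
  intro e he
  simp only [btwE, Finset.mem_filter] at he
  simp only [edgeSet, Finset.mem_filter, Finset.mem_univ, true_and]
  exact he.2.1

lemma cut_identity (S T : Finset (Fin n)) (f : Sym2 (Fin n) → ℝ) :
    ∑ e ∈ cut S, f e + ∑ e ∈ cut T, f e =
      ∑ e ∈ cut (S ∩ T), f e + ∑ e ∈ cut (S ∪ T), f e + 2 * ∑ e ∈ btwE S T, f e := by
  rw [sum_cut_eq, sum_cut_eq, sum_cut_eq, sum_cut_eq,
    sum_cut_eq' (btw_subset_edgeSet S T), ← Finset.sum_add_distrib,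
    ← Finset.sum_add_distrib, Finset.mul_sum, ← Finset.sum_add_distrib]
  apply Finset.sum_congr rfl
  intro e he
  simp only [edgeSet, Finset.mem_filter, Finset.mem_univ, true_and] at he
  induction e using Sym2.inductionOn with
  | hf u v =>
    rw [Sym2.mk_isDiag_iff] at he
    by_cases hus : u ∈ S <;> by_cases hut : u ∈ T <;>
      by_cases hvs : v ∈ S <;> by_cases hvt : v ∈ T <;>
      simp [mem_cut, mem_btw, he, hus, hut, hvs, hvt, Finset.mem_inter,
        Finset.mem_union] <;> ring

lemma feas {x : Sym2 (Fin n) → ℝ} (hx : InSubtour n x) {S : Finset (Fin n)}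
    (h1 : S.Nonempty) (h2 : S ≠ Finset.univ) : 2 ≤ ∑ e ∈ cut S, x e := by
  have hcard : 1 ≤ S.card := Finset.card_pos.mpr h1
  have hcardlt : S.card < n := by
    have := Finset.card_lt_card (Finset.ssubset_univ_iff.mpr h2)
    simpa using this
  rcases eq_or_lt_of_le hcard with h1' | h1'
  · obtain ⟨v, rfl⟩ := Finset.card_eq_one.mp h1'.symm
    exact (hx.2.1 v).ge
  · by_cases hmid : S.card ≤ n - 2
    · exact hx.2.2 S h1' hmid
    · have hc : Sᶜ.card = 1 := by
        have := Finset.card_compl S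
        simp only [Fintype.card_fin] at this
        omega
      obtain ⟨v, hv⟩ := Finset.card_eq_one.mp hc
      rw [← cut_compl S, hv]
      exact (hx.2.1 v).ge

lemma x_nonneg_on {x : Sym2 (Fin n) → ℝ} (hx : InSubtour n x)
    {A : Finset (Sym2 (Fin n))} (hA : A ⊆ edgeSet n) :
    0 ≤ ∑ e ∈ A, x e :=
  Finset.sum_nonneg fun e he => (hx.1 e (hA he)).1

/-- Uncrossing: if `S` and `T` are tight, intersect, and don't cover everything,
then `S ∩ T` and `S ∪ T` are tight and `x` vanishes on `btwE S T`. -/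
lemma uncross {x : Sym2 (Fin n) → ℝ} (hx : InSubtour n x) {S T : Finset (Fin n)}
    (hST : (S ∩ T).Nonempty) (hcov : S ∪ T ≠ Finset.univ)
    (hS : ∑ e ∈ cut S, x e = 2) (hT : ∑ e ∈ cut T, x e = 2) :
    (∑ e ∈ cut (S ∩ T), x e = 2) ∧ (∑ e ∈ cut (S ∪ T), x e = 2) ∧
      ∀ e ∈ btwE S T, x e = 0 := by
  have hid := cut_identity S T x
  have hA : 2 ≤ ∑ e ∈ cut (S ∩ T), x e :=
    feas hx hST (fun h => hcov (Finset.univ_subset_iff.mp (h ▸ Finset.inter_subset_union)))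
  have hB : 2 ≤ ∑ e ∈ cut (S ∪ T), x e :=
    feas hx (hST.mono Finset.inter_subset_union) hcov
  have hbtw : 0 ≤ ∑ e ∈ btwE S T, x e := x_nonneg_on hx (btw_subset_edgeSet S T)
  have h0 : ∑ e ∈ btwE S T, x e = 0 := by linarith
  refine ⟨by linarith, by linarith, ?_⟩
  intro e he
  have := (Finset.sum_eq_zero_iff_of_nonneg
    (fun e he => (hx.1 e (btw_subset_edgeSet S T he)).1)).mp h0
  exact this e he

lemma btw_single {u v : Fin n} (huv : u ≠ v) :
    btwE ({u} : Finset (Fin n)) {v} = {s(u, v)} := by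
  ext e
  induction e using Sym2.inductionOn with
  | hf a b =>
    simp only [mem_btw, Finset.mem_singleton, Sym2.eq_iff]
    constructor
    · rintro ⟨hne, ⟨rfl, -, rfl, -⟩ | ⟨rfl, -, rfl, -⟩⟩
      · exact Or.inl ⟨rfl, rfl⟩
      · exact Or.inr ⟨rfl, rfl⟩
    · rintro (⟨rfl, rfl⟩ | ⟨rfl, rfl⟩) <;>
        first
        | exact ⟨huv, Or.inl ⟨rfl, fun h => huv h, rfl, fun h => huv h.symm⟩⟩
        | exact ⟨fun h => huv h.symm, Or.inr ⟨rfl, fun h => huv h, rfl, fun h => huv h.symm⟩⟩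

lemma perturb (hn : 3 ≤ n) {x : Sym2 (Fin n) → ℝ} (hx : IsExtremePt n x) (v₀ : Fin n)
    (d : Sym2 (Fin n) → ℝ)
    (hd0 : ∀ e ∈ edgeSet n, x e ≤ 0 → d e = 0)
    (hdT : ∀ S : Finset (Fin n), S.Nonempty → v₀ ∉ S → (∑ e ∈ cut S, x e) = 2 →
      ∑ e ∈ cut S, d e = 0) :
    ∀ e ∈ edgeSet n, d e = 0 := by
  have hsub := hx.1
  -- tight constraints for all nonempty proper subsets
  have hdT' : ∀ S : Finset (Fin n), S.Nonempty → S ≠ Finset.univ →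
      (∑ e ∈ cut S, x e) = 2 → ∑ e ∈ cut S, d e = 0 := by
    intro S h1 h2 ht
    by_cases hv : v₀ ∈ S
    · have h1c : Sᶜ.Nonempty := by
        rw [Finset.nonempty_iff_ne_empty]
        intro h
        exact h2 (by simpa using congrArg (·ᶜ) h)
      have := hdT Sᶜ h1c (by simp [hv]) (by rw [cut_compl]; exact ht)
      rwa [cut_compl] at this
    · exact hdT S h1 hv ht
  have huniv : ∀ v : Fin n, ({v} : Finset (Fin n)) ≠ Finset.univ := by
    intro v h
    have := Finset.card_univ (α := Fin n)
    rw [← h] at this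
    simp at this
    omega
  have hdeg : ∀ v : Fin n, ∑ e ∈ cut ({v} : Finset (Fin n)), d e = 0 := fun v =>
    hdT' {v} ⟨v, Finset.mem_singleton_self v⟩ (huniv v) (hsub.2.1 v)
  have h1e : ∀ u v : Fin n, u ≠ v → x s(u, v) = 1 → d s(u, v) = 0 := by
    intro u v huv hx1
    have hdisj : ({u} : Finset (Fin n)) ∩ {v} = ∅ := by
      simp [Finset.eq_empty_iff_forall_notMem, huv]
    have hcard : ({u} : Finset (Fin n)) ∪ {v} ≠ Finset.univ := by
      intro h
      have h1 : (({u} : Finset (Fin n)) ∪ {v}).card ≤ 2 := by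
        refine le_trans (Finset.card_union_le _ _) (by simp)
      rw [h, Finset.card_univ] at h1
      simp at h1
      omega
    have hidx := cut_identity ({u} : Finset (Fin n)) {v} x
    rw [hdisj, cut_empty, Finset.sum_empty, btw_single huv, Finset.sum_singleton,
      hsub.2.1 u, hsub.2.1 v, hx1] at hidx
    have htU : ∑ e ∈ cut (({u} : Finset (Fin n)) ∪ {v}), x e = 2 := by linarith
    have hdU : ∑ e ∈ cut (({u} : Finset (Fin n)) ∪ {v}), d e = 0 :=
      hdT' _ ⟨u, by simp⟩ hcard htU
    have hidd := cut_identity ({u} : Finset (Fin n)) {v} d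
    rw [hdisj, cut_empty, Finset.sum_empty, btw_single huv, Finset.sum_singleton,
      hdeg u, hdeg v, hdU] at hidd
    linarith
  -- the epsilon
  set Efr := (edgeSet n).filter (fun e => 0 < x e ∧ x e < 1) with hEfr
  set Scon := (Finset.univ : Finset (Finset (Fin n))).filter
    (fun S => 2 < ∑ e ∈ cut S, x e) with hScon
  set B := insert (1 : ℝ)
    ((Efr.image fun e => min (x e) (1 - x e) / (|d e| + 1)) ∪
     (Scon.image fun S => (∑ e ∈ cut S, x e - 2) / (|∑ e ∈ cut S, d e| + 1))) with hB
  have hBne : B.Nonempty := ⟨1, Finset.mem_insert_self _ _⟩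
  set ε := B.min' hBne with hεdef
  have hεpos : 0 < ε := by
    have hmem := B.min'_mem hBne
    rw [← hεdef] at hmem
    rw [hB] at hmem
    rcases Finset.mem_insert.mp hmem with h | h
    · rw [h]; norm_num
    · rcases Finset.mem_union.mp h with h | h
      · obtain ⟨e, he, hrfl⟩ := Finset.mem_image.mp h
        rw [hEfr, Finset.mem_filter] at he
        rw [← hrfl]
        apply div_pos (lt_min he.2.1 (by linarith [he.2.2])) (by positivity)
      · obtain ⟨S, hS, hrfl⟩ := Finset.mem_image.mp h
        rw [hScon, Finset.mem_filter] at hS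
        rw [← hrfl]
        apply div_pos (by linarith [hS.2]) (by positivity)
  -- feasibility of perturbations
  have hkey2 : ∀ η : ℝ, |η| ≤ ε → InSubtour n (fun e => x e + η * d e) := by
    intro η hη
    have hηd : ∀ e ∈ edgeSet n, d e ≠ 0 → |η * d e| ≤ min (x e) (1 - x e) := by
      intro e he hd
      have hx0 : 0 < x e := by
        by_contra h
        exact hd (hd0 e he (by linarith [not_lt.mp h]))
      have hx1 : x e < 1 := by
        rcases lt_or_eq_of_le (hsub.1 e he).2 with h | h
        · exact h
        · exfalso
          induction e using Sym2.inductionOn with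
          | hf u v =>
            have huv : u ≠ v := by
              simp only [edgeSet, Finset.mem_filter, Sym2.mk_isDiag_iff] at he
              exact he.2
            exact hd (h1e u v huv h)
      have hmem : min (x e) (1 - x e) / (|d e| + 1) ∈ B := by
        rw [hB]
        exact Finset.mem_insert_of_mem (Finset.mem_union_left _
          (Finset.mem_image_of_mem _ (Finset.mem_filter.mpr ⟨he, hx0, hx1⟩)))
      have hle : ε ≤ min (x e) (1 - x e) / (|d e| + 1) := Finset.min'_le _ _ hmem
      have hle2 : ε * (|d e| + 1) ≤ min (x e) (1 - x e) := by
        rw [← le_div_iff₀ (by positivity)]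
        exact hle
      calc |η * d e| = |η| * |d e| := abs_mul _ _
        _ ≤ ε * (|d e| + 1) := by
            apply mul_le_mul hη (by linarith) (abs_nonneg _) (le_of_lt hεpos)
        _ ≤ _ := hle2
    refine ⟨fun e he => ?_, fun v => ?_, fun S hS1 hS2 => ?_⟩
    · by_cases hd : d e = 0
      · simpa [hd] using hsub.1 e he
      · have := hηd e he hd
        have h1 := abs_le.mp this
        have h2 := min_le_left (x e) (1 - x e)
        have h3 := min_le_right (x e) (1 - x e)
        constructor <;> simp only <;> linarith
    · simp only [Finset.sum_add_distrib, ← Finset.mul_sum, hsub.2.1 v, hdeg v]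
      ring
    · rw [Finset.sum_add_distrib, ← Finset.mul_sum]
      by_cases ht : ∑ e ∈ cut S, x e = 2
      · have h0 : ∑ e ∈ cut S, d e = 0 := by
          apply hdT' S (Finset.card_pos.mp (by omega)) _ ht
          intro h
          rw [h, Finset.card_univ] at hS2
          simp at hS2
          omega
        rw [ht, h0]
        norm_num
      · have hgt : 2 < ∑ e ∈ cut S, x e :=
          lt_of_le_of_ne (hsub.2.2 S hS1 hS2) (Ne.symm ht)
        have hmem : (∑ e ∈ cut S, x e - 2) / (|∑ e ∈ cut S, d e| + 1) ∈ B := by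
          rw [hB]
          exact Finset.mem_insert_of_mem (Finset.mem_union_right _
            (Finset.mem_image_of_mem _ (Finset.mem_filter.mpr
              ⟨Finset.mem_univ _, hgt⟩)))
        have hle : ε ≤ _ := Finset.min'_le _ _ hmem
        have hle2 : ε * (|∑ e ∈ cut S, d e| + 1) ≤ ∑ e ∈ cut S, x e - 2 := by
          rw [← le_div_iff₀ (by positivity)]
          exact hle
        have habs : |η * ∑ e ∈ cut S, d e| ≤ ∑ e ∈ cut S, x e - 2 := by
          calc |η * ∑ e ∈ cut S, d e| = |η| * |∑ e ∈ cut S, d e| := abs_mul _ _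
            _ ≤ ε * (|∑ e ∈ cut S, d e| + 1) := by
                apply mul_le_mul hη (by linarith) (abs_nonneg _) (le_of_lt hεpos)
            _ ≤ _ := hle2
        have := abs_le.mp habs
        linarith [this.1]
  -- conclude
  have hy := hkey2 ε (by rw [abs_of_pos hεpos])
  have hz := hkey2 (-ε) (by rw [abs_neg, abs_of_pos hεpos])
  have happ := hx.2 _ _ hy hz (fun e _ => by ring)
  intro e he
  have h := happ e he
  have h2 : 2 * ε * d e = 0 := by linarith
  rcases mul_eq_zero.mp h2 with h3 | h3
  · exfalso; linarith
  · exact h3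


/-- A laminar family of nonempty subsets of `U`, none equal to `U`,
has at most `2|U| - 2` members. -/
lemma laminar_card_aux {α : Type*} [DecidableEq α] (L : Finset (Finset α)) :
    ∀ U : Finset α, (∀ S ∈ L, S ⊆ U) → (∀ S ∈ L, S.Nonempty) →
    (∀ S ∈ L, ∀ T ∈ L, S ∩ T = ∅ ∨ S ⊆ T ∨ T ⊆ S) → U ∉ L →
    L.card ≤ 2 * U.card - 2 := by
  induction L using Finset.strongInductionOn with
  | _ L IH =>
    intro U hsub hne hlam hU
    rcases L.eq_empty_or_nonempty with rfl | hLne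
    · simp
    obtain ⟨M, hM, hMmax⟩ := L.exists_max_image Finset.card hLne
    have hsplit : ∀ S ∈ L, S ⊆ M ∨ S ∩ M = ∅ := by
      intro S hS
      rcases hlam S hS M hM with h | h | h
      · exact Or.inr h
      · exact Or.inl h
      · exact Or.inl (le_of_eq (Finset.eq_of_subset_of_card_le h (hMmax S hS)).symm)
    set L₁ := L.filter (fun S => S ⊆ M) with hL₁
    set L₂ := L.filter (fun S => ¬ S ⊆ M) with hL₂
    have hcard : L₁.card + L₂.card = L.card :=
      Finset.card_filter_add_card_filter_not _
    have hML₁ : M ∈ L₁ := Finset.mem_filter.mpr ⟨hM, Finset.Subset.refl M⟩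
    have hL₂disj : ∀ S ∈ L₂, S ∩ M = ∅ := by
      intro S hS
      rw [hL₂, Finset.mem_filter] at hS
      rcases hsplit S hS.1 with h | h
      · exact absurd h hS.2
      · exact h
    have hMU : M ⊂ U := Finset.ssubset_iff_subset_ne.mpr
      ⟨hsub M hM, fun h => hU (h ▸ hM)⟩
    -- bound L₁
    have hb1 : (L₁.erase M).card ≤ 2 * M.card - 2 := by
      apply IH (L₁.erase M)
        (Finset.ssubset_def.mpr
          ⟨(Finset.erase_subset _ _).trans (Finset.filter_subset _ _),
           fun h => Finset.notMem_erase M L₁ (h hM)⟩)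
      · intro S hS
        exact (Finset.mem_filter.mp (Finset.mem_of_mem_erase hS)).2
      · intro S hS
        exact hne S (Finset.filter_subset _ _ (Finset.mem_of_mem_erase hS))
      · intro S hS T hT
        exact hlam S (Finset.filter_subset _ _ (Finset.mem_of_mem_erase hS)) T
          (Finset.filter_subset _ _ (Finset.mem_of_mem_erase hT))
      · exact Finset.notMem_erase M L₁
    -- bound L₂
    have hML₂ : M ∉ L₂ := by
      rw [hL₂, Finset.mem_filter]
      rintro ⟨-, h⟩
      exact h (Finset.Subset.refl M)
    have hb2 : (L₂.erase (U \ M)).card ≤ 2 * (U \ M).card - 2 := by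
      apply IH (L₂.erase (U \ M))
        (Finset.ssubset_def.mpr
          ⟨(Finset.erase_subset _ _).trans (Finset.filter_subset _ _),
           fun h => hML₂ (Finset.mem_of_mem_erase (h hM))⟩)
      · intro S hS
        have hS2 := Finset.mem_of_mem_erase hS
        rw [Finset.subset_sdiff]
        exact ⟨hsub S (Finset.filter_subset _ _ hS2),
          Finset.disjoint_iff_inter_eq_empty.mpr (hL₂disj S hS2)⟩
      · intro S hS
        exact hne S (Finset.filter_subset _ _ (Finset.mem_of_mem_erase hS))
      · intro S hS T hT
        exact hlam S (Finset.filter_subset _ _ (Finset.mem_of_mem_erase hS)) T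
          (Finset.filter_subset _ _ (Finset.mem_of_mem_erase hT))
      · exact Finset.notMem_erase _ _
    have e1 : (L₁.erase M).card + 1 = L₁.card := Finset.card_erase_add_one hML₁
    have e2 : L₂.card ≤ (L₂.erase (U \ M)).card + 1 := by
      by_cases h : (U \ M) ∈ L₂
      · rw [Finset.card_erase_add_one h]
      · rw [Finset.erase_eq_of_notMem h]
        omega
    have e3 : (U \ M).card = U.card - M.card := Finset.card_sdiff_of_subset hMU.subset
    have e4 : M.card < U.card := Finset.card_lt_card hMU
    have e5 : 1 ≤ M.card := Finset.card_pos.mpr (hne M hM)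
    omega

/-- A laminar family of nonempty subsets of `U` has at most `2|U| - 1` members. -/
lemma laminar_card {α : Type*} [DecidableEq α] (L : Finset (Finset α)) (U : Finset α)
    (hsub : ∀ S ∈ L, S ⊆ U) (hne : ∀ S ∈ L, S.Nonempty)
    (hlam : ∀ S ∈ L, ∀ T ∈ L, S ∩ T = ∅ ∨ S ⊆ T ∨ T ⊆ S) :
    L.card ≤ 2 * U.card - 1 := by
  have h1 : (L.erase U).card ≤ 2 * U.card - 2 := by
    apply laminar_card_aux (L.erase U) U
    · intro S hS; exact hsub S (Finset.mem_of_mem_erase hS)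
    · intro S hS; exact hne S (Finset.mem_of_mem_erase hS)
    · intro S hS T hT
      exact hlam S (Finset.mem_of_mem_erase hS) T (Finset.mem_of_mem_erase hT)
    · exact Finset.notMem_erase _ _
  have h2 : L.card ≤ (L.erase U).card + 1 := by
    by_cases h : U ∈ L
    · rw [Finset.card_erase_add_one h]
    · rw [Finset.erase_eq_of_notMem h]; omega
  rcases L.eq_empty_or_nonempty with rfl | hLne
  · simp
  · have hU1 : 1 ≤ U.card := by
      obtain ⟨S, hS⟩ := hLne
      obtain ⟨a, ha⟩ := hne S hS
      exact Finset.card_pos.mpr ⟨a, hsub S hS ha⟩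
    omega


/-- Two sets are laminar: disjoint or nested. -/
def LamPair {α : Type*} [DecidableEq α] (S T : Finset α) : Prop :=
  S ∩ T = ∅ ∨ S ⊆ T ∨ T ⊆ S

lemma LamPair.comm {α : Type*} [DecidableEq α] {S T : Finset α} (h : LamPair S T) :
    LamPair T S := by
  rcases h with h | h | h
  · exact Or.inl (by rwa [Finset.inter_comm])
  · exact Or.inr (Or.inr h)
  · exact Or.inr (Or.inl h)

lemma lam_inter {α : Type*} [DecidableEq α] {Q R S : Finset α}
    (h1 : LamPair Q R) (h2 : LamPair Q S) : LamPair Q (S ∩ R) := by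
  rcases h2 with h2 | h2 | h2
  · refine Or.inl (Finset.subset_empty.mp ?_)
    rw [← h2]
    exact Finset.inter_subset_inter Finset.Subset.rfl Finset.inter_subset_left
  · rcases h1 with h1 | h1 | h1
    · refine Or.inl (Finset.subset_empty.mp ?_)
      rw [← h1]
      exact Finset.inter_subset_inter Finset.Subset.rfl Finset.inter_subset_right
    · exact Or.inr (Or.inl (Finset.subset_inter h2 h1))
    · exact Or.inr (Or.inr (Finset.inter_subset_right.trans h1))
  · exact Or.inr (Or.inr (Finset.inter_subset_left.trans h2))

lemma lam_union {α : Type*} [DecidableEq α] {Q R S : Finset α}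
    (h1 : LamPair Q R) (h2 : LamPair Q S) (hne : (S ∩ R).Nonempty) :
    LamPair Q (S ∪ R) := by
  rcases h2 with h2 | h2 | h2
  · rcases h1 with h1 | h1 | h1
    · refine Or.inl ?_
      rw [Finset.inter_union_distrib_left, h1, h2, Finset.union_empty]
    · exact Or.inr (Or.inl (h1.trans Finset.subset_union_right))
    · exfalso
      obtain ⟨a, ha⟩ := hne
      have haR := Finset.mem_of_mem_inter_right ha
      have haS := Finset.mem_of_mem_inter_left ha
      have : a ∈ Q ∩ S := Finset.mem_inter.mpr ⟨h1 haR, haS⟩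
      simp [h2] at this
  · exact Or.inr (Or.inl (h2.trans Finset.subset_union_left))
  · rcases h1 with h1 | h1 | h1
    · exfalso
      obtain ⟨a, ha⟩ := hne
      have : a ∈ Q ∩ R := Finset.mem_inter.mpr
        ⟨h2 (Finset.mem_of_mem_inter_left ha), Finset.mem_of_mem_inter_right ha⟩
      simp [h1] at this
    · exact Or.inr (Or.inl (h1.trans Finset.subset_union_right))
    · exact Or.inr (Or.inr (Finset.union_subset h2 h1))


lemma uncross_induct {x : Sym2 (Fin n) → ℝ} (hx : InSubtour n x) (v₀ : Fin n)
    (L : Finset (Finset (Fin n)))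
    (hLgood : ∀ R ∈ L, R.Nonempty ∧ v₀ ∉ R ∧ ∑ e ∈ cut R, x e = 2)
    (hpair : ∀ Q ∈ L, ∀ R ∈ L, LamPair Q R)
    (hmax : ∀ S : Finset (Fin n), S.Nonempty → v₀ ∉ S → (∑ e ∈ cut S, x e = 2) →
      (∀ R ∈ L, LamPair S R) → S ∈ L)
    (d : Sym2 (Fin n) → ℝ)
    (hd0 : ∀ e ∈ edgeSet n, x e ≤ 0 → d e = 0)
    (hdL : ∀ R ∈ L, ∑ e ∈ cut R, d e = 0) :
    ∀ k : ℕ, ∀ S : Finset (Fin n), S.Nonempty → v₀ ∉ S → (∑ e ∈ cut S, x e = 2) →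
      (L.filter (fun R => ¬ LamPair S R)).card ≤ k → ∑ e ∈ cut S, d e = 0 := by
  have key0 : ∀ S : Finset (Fin n), S.Nonempty → v₀ ∉ S → (∑ e ∈ cut S, x e = 2) →
      (L.filter (fun R => ¬ LamPair S R)) = ∅ → ∑ e ∈ cut S, d e = 0 := by
    intro S h1 h2 h3 hemp
    refine hdL S (hmax S h1 h2 h3 ?_)
    intro R hR
    by_contra hcon
    exact Finset.eq_empty_iff_forall_notMem.mp hemp R
      (Finset.mem_filter.mpr ⟨hR, hcon⟩)
  intro k
  induction k with
  | zero =>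
    intro S h1 h2 h3 hc
    exact key0 S h1 h2 h3 (Finset.card_eq_zero.mp (Nat.le_zero.mp hc))
  | succ k ih =>
    intro S h1 h2 h3 hc
    rcases (L.filter (fun R => ¬ LamPair S R)).eq_empty_or_nonempty with hemp | hne
    · exact key0 S h1 h2 h3 hemp
    obtain ⟨R, hRf⟩ := hne
    have hRmem := Finset.mem_filter.mp hRf
    obtain ⟨hRL, hcross⟩ := hRmem
    obtain ⟨hRne, hRv, hRt⟩ := hLgood R hRL
    have hcross' : ¬(S ∩ R = ∅ ∨ S ⊆ R ∨ R ⊆ S) := hcross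
    push_neg at hcross'
    have hSRne : (S ∩ R).Nonempty := hcross'.1
    have hcov : S ∪ R ≠ Finset.univ := by
      intro h
      have : v₀ ∈ S ∪ R := h ▸ Finset.mem_univ v₀
      rcases Finset.mem_union.mp this with h' | h'
      · exact h2 h'
      · exact hRv h'
    obtain ⟨htA, htB, hbtw0⟩ := uncross hx hSRne hcov h3 hRt
    have hbtwd : ∑ e ∈ btwE S R, d e = 0 :=
      Finset.sum_eq_zero fun e he =>
        hd0 e (btw_subset_edgeSet S R he) (le_of_eq (hbtw0 e he))
    have hRfS : R ∈ L.filter (fun R => ¬ LamPair S R) := hRf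
    -- crossing counts decrease
    have hsubA : L.filter (fun Q => ¬ LamPair (S ∩ R) Q) ⊆
        (L.filter (fun Q => ¬ LamPair S Q)).erase R := by
      intro Q hQ
      obtain ⟨hQL, hQA⟩ := Finset.mem_filter.mp hQ
      have hQR : LamPair Q R := hpair Q hQL R hRL
      refine Finset.mem_erase.mpr ⟨?_, Finset.mem_filter.mpr ⟨hQL, ?_⟩⟩
      · rintro rfl
        exact hQA (Or.inr (Or.inl Finset.inter_subset_right))
      · intro hSQ
        exact hQA (lam_inter hQR hSQ.comm).comm
    have hsubB : L.filter (fun Q => ¬ LamPair (S ∪ R) Q) ⊆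
        (L.filter (fun Q => ¬ LamPair S Q)).erase R := by
      intro Q hQ
      obtain ⟨hQL, hQB⟩ := Finset.mem_filter.mp hQ
      have hQR : LamPair Q R := hpair Q hQL R hRL
      refine Finset.mem_erase.mpr ⟨?_, Finset.mem_filter.mpr ⟨hQL, ?_⟩⟩
      · rintro rfl
        exact hQB (Or.inr (Or.inr Finset.subset_union_right))
      · intro hSQ
        exact hQB (lam_union hQR hSQ.comm hSRne).comm
    have hcardA : (L.filter (fun Q => ¬ LamPair (S ∩ R) Q)).card ≤ k := by
      have h1' := Finset.card_le_card hsubA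
      rw [Finset.card_erase_of_mem hRfS] at h1'
      omega
    have hcardB : (L.filter (fun Q => ¬ LamPair (S ∪ R) Q)).card ≤ k := by
      have h1' := Finset.card_le_card hsubB
      rw [Finset.card_erase_of_mem hRfS] at h1'
      omega
    have hdA : ∑ e ∈ cut (S ∩ R), d e = 0 :=
      ih (S ∩ R) hSRne (fun h => h2 (Finset.mem_of_mem_inter_left h)) htA hcardA
    have hdB : ∑ e ∈ cut (S ∪ R), d e = 0 :=
      ih (S ∪ R) (hSRne.mono Finset.inter_subset_union)
        (fun h => (Finset.mem_union.mp h).elim h2 hRv) htB hcardB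
    have hidd := cut_identity S R d
    rw [hdA, hdB, hbtwd, hdL R hRL] at hidd
    linarith

/-- Every extreme point of the subtour polytope has a support graph with
at most `2n - 3` edges. -/
theorem support_card_le (n : ℕ) (hn : 3 ≤ n) (x : Sym2 (Fin n) → ℝ)
    (hx : IsExtremePt n x) : (supportEdges x).card ≤ 2 * n - 3 := by
  classical
  have hsub := hx.1
  have hn0 : 0 < n := by omega
  set v₀ : Fin n := ⟨0, hn0⟩ with hv₀
  set 𝒯 := (Finset.univ : Finset (Finset (Fin n))).filter
    (fun S => S.Nonempty ∧ v₀ ∉ S ∧ ∑ e ∈ cut S, x e = 2) with h𝒯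
  set 𝒞 := 𝒯.powerset.filter (fun M => ∀ Q ∈ M, ∀ R ∈ M, LamPair Q R) with h𝒞
  have hCempty : (∅ : Finset (Finset (Fin n))) ∈ 𝒞 := by
    rw [h𝒞, Finset.mem_filter]
    exact ⟨Finset.empty_mem_powerset _, by simp⟩
  obtain ⟨L, hL𝒞, hLmax⟩ := 𝒞.exists_max_image Finset.card ⟨∅, hCempty⟩
  rw [h𝒞, Finset.mem_filter] at hL𝒞
  obtain ⟨hLsub', hLpair⟩ := hL𝒞
  have hLsub : L ⊆ 𝒯 := Finset.mem_powerset.mp hLsub'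
  have hLgood : ∀ R ∈ L, R.Nonempty ∧ v₀ ∉ R ∧ ∑ e ∈ cut R, x e = 2 := by
    intro R hR
    have := hLsub hR
    rw [h𝒯, Finset.mem_filter] at this
    exact this.2
  have hmax : ∀ S : Finset (Fin n), S.Nonempty → v₀ ∉ S → (∑ e ∈ cut S, x e = 2) →
      (∀ R ∈ L, LamPair S R) → S ∈ L := by
    intro S h1 h2 h3 hall
    by_contra hS
    have hins : insert S L ∈ 𝒞 := by
      rw [h𝒞, Finset.mem_filter]
      constructor
      · rw [Finset.mem_powerset]
        intro T hT
        rcases Finset.mem_insert.mp hT with rfl | hT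
        · rw [h𝒯, Finset.mem_filter]
          exact ⟨Finset.mem_univ _, h1, h2, h3⟩
        · exact hLsub hT
      · intro Q hQ R hR
        rcases Finset.mem_insert.mp hQ with hQ' | hQ' <;>
          rcases Finset.mem_insert.mp hR with hR' | hR'
        · rw [hQ', hR']; exact Or.inr (Or.inl (Finset.Subset.refl _))
        · rw [hQ']; exact hall R hR'
        · rw [hR']; exact (hall Q hQ').comm
        · exact hLpair Q hQ' R hR'
    have hbig := hLmax _ hins
    rw [Finset.card_insert_of_notMem hS] at hbig
    omega
  -- the injective linear map
  have hSEedge : ∀ e ∈ supportEdges x, e ∈ edgeSet n := fun e he =>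
    (Finset.mem_filter.mp he).1
  set Φ : ({e // e ∈ supportEdges x} → ℝ) →ₗ[ℝ] ({R // R ∈ L} → ℝ) :=
    { toFun := fun f R => ∑ e ∈ cut R.1,
        (fun e => if h : e ∈ supportEdges x then f ⟨e, h⟩ else 0) e,
      map_add' := by
        intro f g
        funext R
        simp only [← Finset.sum_add_distrib, Pi.add_apply]
        apply Finset.sum_congr rfl
        intro e _
        by_cases h : e ∈ supportEdges x <;> simp [h]
      map_smul' := by
        intro c f
        funext R
        simp only [RingHom.id_apply, Pi.smul_apply, smul_eq_mul, Finset.mul_sum]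
        apply Finset.sum_congr rfl
        intro e _
        by_cases h : e ∈ supportEdges x <;> simp [h] } with hΦ
  have hker : ∀ f, Φ f = 0 → f = 0 := by
    intro f hf
    set d : Sym2 (Fin n) → ℝ :=
      fun e => if h : e ∈ supportEdges x then f ⟨e, h⟩ else 0 with hd
    have hd0 : ∀ e ∈ edgeSet n, x e ≤ 0 → d e = 0 := by
      intro e he hxe
      have hnot : e ∉ supportEdges x := by
        rw [supportEdges, Finset.mem_filter]
        push_neg
        intro
        linarith
      simp [hd, hnot]
    have hdL : ∀ R ∈ L, ∑ e ∈ cut R, d e = 0 := by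
      intro R hR
      have := congrFun hf ⟨R, hR⟩
      simpa [hΦ, hd] using this
    have hdT : ∀ S : Finset (Fin n), S.Nonempty → v₀ ∉ S →
        (∑ e ∈ cut S, x e = 2) → ∑ e ∈ cut S, d e = 0 := by
      intro S h1 h2 h3
      exact uncross_induct hsub v₀ L hLgood hLpair hmax d hd0 hdL L.card S h1 h2 h3
        (Finset.card_le_card (Finset.filter_subset _ _))
    have hall : ∀ e ∈ edgeSet n, d e = 0 := perturb hn hx v₀ d hd0 hdT
    funext es
    have h2 := hall es.1 (hSEedge _ es.2)
    rw [hd] at h2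
    simp only [es.2, dif_pos] at h2
    simpa using h2
  have hinj : Function.Injective Φ := by
    intro f g hfg
    have h0 : Φ (f - g) = 0 := by rw [map_sub, hfg, sub_self]
    have := hker _ h0
    exact sub_eq_zero.mp this
  have hrank : (supportEdges x).card ≤ L.card := by
    have h1 := LinearMap.finrank_le_finrank_of_injective hinj
    rwa [Module.finrank_fintype_fun_eq_card, Module.finrank_fintype_fun_eq_card,
      Fintype.card_coe, Fintype.card_coe] at h1
  have hlamcard : L.card ≤ 2 * (Finset.univ.erase v₀).card - 1 := by
    apply laminar_card L (Finset.univ.erase v₀)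
    · intro S hS
      intro a ha
      refine Finset.mem_erase.mpr ⟨?_, Finset.mem_univ a⟩
      rintro rfl
      exact (hLgood S hS).2.1 ha
    · intro S hS
      exact (hLgood S hS).1
    · intro S hS T hT
      exact hLpair S hS T hT
  have hec : (Finset.univ.erase v₀).card = n - 1 := by
    rw [Finset.card_erase_of_mem (Finset.mem_univ v₀), Finset.card_univ,
      Fintype.card_fin]
  rw [hec] at hlamcard
  omega
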